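/- Consider the binomial lattice y^n_k = (√Y₀ + (σ/2)(2k−n)√h)² · 1_{√Y₀ + (σ/2)(2k−n)√h > 0} for 0 ≤ k ≤ n, with Y₀, σ > 0, h > 0. Then for all n,k: (i) y^n_k ≤ y^n_{k+1}; (ii) y^{n+1}_k ≤ y^n_k ≤ y^{n+1}_{k+1}; (iii) y^n_k ≤ y^n_{k−1} + σ²h + 2σ√(y^n_{k−1} h); (iv) y^{n+1}_k ≤ y^n_k + (σ²/4)h − σ√(y^n_k h). -/

import Mathlib

open Real

/-- The node values of the CIR binomial lattice:
y^n_k = (√Y₀ + (σ/2)(2k−n)√h)² if √Y₀ + (σ/2)(2k−n)√h > 0, and 0 otherwise. -/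
noncomputable def latticeY (Y₀ σ h : ℝ) (n k : ℕ) : ℝ :=
  if 0 < Real.sqrt Y₀ + σ / 2 * (2 * (k : ℝ) - (n : ℝ)) * Real.sqrt h then
    (Real.sqrt Y₀ + σ / 2 * (2 * (k : ℝ) - (n : ℝ)) * Real.sqrt h) ^ 2
  else 0

lemma latticeY_eq_max (Y₀ σ h : ℝ) (n k : ℕ) :
    latticeY Y₀ σ h n k =
      (max (Real.sqrt Y₀ + σ / 2 * (2 * (k : ℝ) - (n : ℝ)) * Real.sqrt h) 0) ^ 2 := by
  unfold latticeY
  split_ifs with hpos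
  · rw [max_eq_left hpos.le]
  · rw [max_eq_right (le_of_not_gt hpos)]
    simp

lemma sq_max_mono {a b : ℝ} (hab : a ≤ b) : (max a 0) ^ 2 ≤ (max b 0) ^ 2 :=
  pow_le_pow_left₀ (le_max_right a 0) (max_le_max hab le_rfl) 2

lemma key_add {a c : ℝ} (hc : 0 ≤ c) :
    (max (a + c) 0) ^ 2 ≤ (max a 0) ^ 2 + c ^ 2 + 2 * c * (max a 0) := by
  have h1 : max (a + c) 0 ≤ max a 0 + c :=
    max_le (add_le_add (le_max_left a 0) le_rfl)
      (add_nonneg (le_max_right a 0) hc)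
  have h2 := pow_le_pow_left₀ (le_max_right (a + c) 0) h1 2
  nlinarith

lemma key_sub {a c : ℝ} (hc : 0 ≤ c) :
    (max (a - c) 0) ^ 2 ≤ (max a 0) ^ 2 + c ^ 2 - 2 * c * (max a 0) := by
  rcases le_or_gt (a - c) 0 with hle | hlt
  · rw [max_eq_right hle]
    nlinarith [sq_nonneg (max a 0 - c)]
  · have ha : 0 < a := by linarith
    rw [max_eq_left hlt.le, max_eq_left ha.le]
    ring_nf
    nlinarith

/-- Elementary monotonicity/comparison properties of the CIR binomial lattice. -/
theorem latticeY_basic_inequalities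
    (Y₀ σ h : ℝ) (hY₀ : 0 < Y₀) (hσ : 0 < σ) (hh : 0 < h) (n k : ℕ) :
    latticeY Y₀ σ h n k ≤ latticeY Y₀ σ h n (k + 1) ∧
    latticeY Y₀ σ h (n + 1) k ≤ latticeY Y₀ σ h n k ∧
    latticeY Y₀ σ h n k ≤ latticeY Y₀ σ h (n + 1) (k + 1) ∧
    latticeY Y₀ σ h n (k + 1) ≤
      latticeY Y₀ σ h n k + σ ^ 2 * h + 2 * σ * Real.sqrt (latticeY Y₀ σ h n k * h) ∧
    latticeY Y₀ σ h (n + 1) k ≤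
      latticeY Y₀ σ h n k + σ ^ 2 / 4 * h - σ * Real.sqrt (latticeY Y₀ σ h n k * h) := by
  set a : ℝ := Real.sqrt Y₀ + σ / 2 * (2 * (k : ℝ) - (n : ℝ)) * Real.sqrt h with ha
  have hs : 0 < Real.sqrt h := Real.sqrt_pos.mpr hh
  have hσs : 0 ≤ σ * Real.sqrt h := by positivity
  have e0 : latticeY Y₀ σ h n k = (max a 0) ^ 2 := latticeY_eq_max ..
  have e1 : latticeY Y₀ σ h n (k + 1) = (max (a + σ * Real.sqrt h) 0) ^ 2 := by
    rw [latticeY_eq_max, ha]; push_cast; ring_nf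
  have e2 : latticeY Y₀ σ h (n + 1) k = (max (a - σ / 2 * Real.sqrt h) 0) ^ 2 := by
    rw [latticeY_eq_max, ha]; push_cast; ring_nf
  have e3 : latticeY Y₀ σ h (n + 1) (k + 1) = (max (a + σ / 2 * Real.sqrt h) 0) ^ 2 := by
    rw [latticeY_eq_max, ha]; push_cast; ring_nf
  have esqrt : Real.sqrt (latticeY Y₀ σ h n k * h) = max a 0 * Real.sqrt h := by
    rw [e0, Real.sqrt_mul (by positivity), Real.sqrt_sq (le_max_right a 0)]
  refine ⟨?_, ?_, ?_, ?_, ?_⟩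
  · rw [e0, e1]; exact sq_max_mono (by nlinarith)
  · rw [e0, e2]; exact sq_max_mono (by nlinarith)
  · rw [e0, e3]; exact sq_max_mono (by nlinarith)
  · rw [esqrt, e0, e1]
    have := key_add (a := a) (c := σ * Real.sqrt h) hσs
    have hsq : Real.sqrt h ^ 2 = h := Real.sq_sqrt hh.le
    nlinarith
  · rw [esqrt, e0, e2]
    have := key_sub (a := a) (c := σ / 2 * Real.sqrt h) (by positivity)
    have hsq : Real.sqrt h ^ 2 = h := Real.sq_sqrt hh.le
    nlinarith
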